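/- Let μ > 0 and α₀ < √(μ/π). Then the function w(ξ) = α₀ e^{−ξ²/(4μ)} / (1 − (α₀/(2μ)) ∫_{−∞}^ξ e^{−η²/(4μ)} dη) is integrable on ℝ and ∫_ℝ w(ξ) dξ = −2μ log(1 − α₀ √(π/μ)). In particular, if α₀ = √(μ/π)(1 − e^{−M/(2μ)}) for some M ∈ ℝ, then ∫_ℝ w(ξ) dξ = M. -/

import Mathlib

open MeasureTheory Set Filter

/-- The denominator of the self-similar diffusion wave. -/
noncomputable def Dfun (μ α₀ : ℝ) (ξ : ℝ) : ℝ :=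
  1 - α₀ / (2 * μ) * ∫ η in Set.Iio ξ, Real.exp (-η ^ 2 / (4 * μ))

/-- The self-similar diffusion wave `w(ξ) = α₀ e^{−ξ²/(4μ)} / D(ξ)`. -/
noncomputable def wfun (μ α₀ : ℝ) (ξ : ℝ) : ℝ :=
  α₀ * Real.exp (-ξ ^ 2 / (4 * μ)) / Dfun μ α₀ ξ

/-- for `μ > 0` and `α₀ < √(μ/π)`, the diffusion wave is integrable with
total mass `−2μ log(1 − α₀ √(π/μ))`; in particular, if `α₀ = √(μ/π)(1 − e^{−M/(2μ)})`
then the mass equals `M`. -/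
theorem stmt2 (μ α₀ : ℝ) (hμ : 0 < μ) (hα : α₀ < Real.sqrt (μ / Real.pi)) :
    Integrable (wfun μ α₀) ∧
      (∫ ξ : ℝ, wfun μ α₀ ξ) = -2 * μ * Real.log (1 - α₀ * Real.sqrt (Real.pi / μ)) ∧
      ∀ M : ℝ, α₀ = Real.sqrt (μ / Real.pi) * (1 - Real.exp (-M / (2 * μ))) →
        (∫ ξ : ℝ, wfun μ α₀ ξ) = M := by
  have hπ := Real.pi_pos
  set g : ℝ → ℝ := fun η => Real.exp (-η ^ 2 / (4 * μ)) with hg_def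
  have hg_pos : ∀ η, 0 < g η := fun η => Real.exp_pos _
  have hg_cont : Continuous g := by fun_prop
  have hb : (0 : ℝ) < 1 / (4 * μ) := by positivity
  have hg_eq : g = fun η => Real.exp (-(1 / (4 * μ)) * η ^ 2) := by
    funext η
    simp only [hg_def]
    congr 1
    field_simp
  have hg_int : Integrable g := by
    rw [hg_eq]; exact integrable_exp_neg_mul_sq hb
  -- total gaussian integral
  set s : ℝ := Real.sqrt (Real.pi / μ) with hs_def
  have hs_pos : 0 < s := Real.sqrt_pos.2 (by positivity)
  have hI : (∫ η, g η) = 2 * μ * s := by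
    rw [hg_eq, integral_gaussian]
    have h1 : Real.pi / (1 / (4 * μ)) = (2 * μ) ^ 2 * (Real.pi / μ) := by
      field_simp; ring
    rw [h1, Real.sqrt_mul (by positivity), Real.sqrt_sq (by positivity)]
  set F : ℝ → ℝ := fun ξ => ∫ η in Iio ξ, g η with hF_def
  have hF_nonneg : ∀ ξ, 0 ≤ F ξ :=
    fun ξ => setIntegral_nonneg measurableSet_Iio (fun η _ => (hg_pos η).le)
  have hF_le : ∀ ξ, F ξ ≤ 2 * μ * s := fun ξ =>
    le_of_le_of_eq (setIntegral_le_integral hg_int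
      (Filter.Eventually.of_forall fun η => (hg_pos η).le)) hI
  -- sqrt(μ/π) * sqrt(π/μ) = 1
  have hss : Real.sqrt (μ / Real.pi) * s = 1 := by
    rw [hs_def, ← Real.sqrt_mul (by positivity)]
    rw [show μ / Real.pi * (Real.pi / μ) = 1 by field_simp]
    exact Real.sqrt_one
  set ε : ℝ := 1 - α₀ * s with hε_def
  have hε_pos : 0 < ε := by
    have h2 : α₀ * s < Real.sqrt (μ / Real.pi) * s := mul_lt_mul_of_pos_right hα hs_pos
    rw [hss] at h2
    simp only [hε_def]; linarith
  set δ : ℝ := min ε 1 with hδ_def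
  have hδ_pos : 0 < δ := lt_min hε_pos one_pos
  have hcI : α₀ / (2 * μ) * (2 * μ * s) = α₀ * s := by
    field_simp
  have hD_eq : ∀ ξ, Dfun μ α₀ ξ = 1 - α₀ / (2 * μ) * F ξ := fun ξ => rfl
  have hD_lb : ∀ ξ, δ ≤ Dfun μ α₀ ξ := by
    intro ξ
    rw [hD_eq]
    rcases le_or_gt 0 α₀ with h0 | h0
    · have hc : 0 ≤ α₀ / (2 * μ) := by positivity
      have h3 : α₀ / (2 * μ) * F ξ ≤ α₀ / (2 * μ) * (2 * μ * s) :=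
        mul_le_mul_of_nonneg_left (hF_le ξ) hc
      rw [hcI] at h3
      have := min_le_left ε 1
      simp only [hε_def] at this ⊢
      linarith
    · have hc : α₀ / (2 * μ) ≤ 0 := by
        apply div_nonpos_of_nonpos_of_nonneg h0.le (by positivity)
      have h3 : α₀ / (2 * μ) * F ξ ≤ 0 := mul_nonpos_iff.2 (Or.inr ⟨hc, hF_nonneg ξ⟩)
      have := min_le_right ε 1
      linarith
  have hD_pos : ∀ ξ, 0 < Dfun μ α₀ ξ := fun ξ => lt_of_lt_of_le hδ_pos (hD_lb ξ)
  have hD_ne : ∀ ξ, Dfun μ α₀ ξ ≠ 0 := fun ξ => (hD_pos ξ).ne'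
  -- derivative of F
  have hF_deriv : ∀ ξ, HasDerivAt F (g ξ) ξ := by
    have hFeq : F = fun ξ => (∫ η in Iic (0 : ℝ), g η) + ∫ t in (0 : ℝ)..ξ, g t := by
      funext ξ
      have h1 : F ξ = ∫ η in Iic ξ, g η := setIntegral_congr_set Iio_ae_eq_Iic
      have h2 := intervalIntegral.integral_Iic_sub_Iic (hg_int.integrableOn) (hg_int.integrableOn)
        (a := (0 : ℝ)) (b := ξ) (f := g)
      rw [h1]; linarith
    rw [hFeq]
    intro ξ
    exact (intervalIntegral.integral_hasDerivAt_right
      hg_int.intervalIntegrable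
      (hg_cont.stronglyMeasurableAtFilter _ _)
      hg_cont.continuousAt).const_add _
  have hD_deriv : ∀ ξ, HasDerivAt (Dfun μ α₀) (-(α₀ / (2 * μ) * g ξ)) ξ := by
    intro ξ
    exact ((hF_deriv ξ).const_mul (α₀ / (2 * μ))).const_sub 1
  have hD_cont : Continuous (Dfun μ α₀) := by
    apply continuous_iff_continuousAt.2
    exact fun ξ => (hD_deriv ξ).continuousAt
  -- w is continuous
  have hw_eq : ∀ ξ, wfun μ α₀ ξ = α₀ * g ξ / Dfun μ α₀ ξ := fun ξ => rfl
  have hw_cont : Continuous (wfun μ α₀) := by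
    have : (wfun μ α₀) = fun ξ => α₀ * g ξ / Dfun μ α₀ ξ := funext hw_eq
    rw [this]
    exact (continuous_const.mul hg_cont).div hD_cont hD_ne
  -- integrability
  have hw_int : Integrable (wfun μ α₀) := by
    apply Integrable.mono (hg_int.const_mul (|α₀| / δ)) hw_cont.aestronglyMeasurable
    apply Filter.Eventually.of_forall
    intro ξ
    rw [hw_eq, Real.norm_eq_abs, Real.norm_eq_abs, abs_div, abs_mul]
    rw [abs_of_pos (hg_pos ξ), abs_of_pos (hD_pos ξ)]
    rw [abs_of_nonneg (by positivity : (0:ℝ) ≤ |α₀| / δ * g ξ)]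
    calc |α₀| * g ξ / Dfun μ α₀ ξ ≤ |α₀| * g ξ / δ :=
          div_le_div_of_nonneg_left (by positivity) hδ_pos (hD_lb ξ)
      _ = |α₀| / δ * g ξ := by ring
  -- limits of F
  have hF_top : Filter.Tendsto F atTop (nhds (2 * μ * s)) := by
    rw [← hI]
    have h := tendsto_setIntegral_of_monotone (μ := volume) (f := g)
      (s := fun i : ℝ => Iio i) (fun i => measurableSet_Iio)
      (fun i j hij => Iio_subset_Iio hij) (by rw [iUnion_Iio]; exact hg_int.integrableOn)
    rw [iUnion_Iio] at h
    simpa [setIntegral_univ] using h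
  have hF_bot : Filter.Tendsto F atBot (nhds 0) := by
    have h := tendsto_setIntegral_of_antitone (μ := volume) (f := g)
      (s := fun i : ℝ => Iio (-i)) (fun i => measurableSet_Iio)
      (fun i j hij => Iio_subset_Iio (by linarith)) ⟨0, hg_int.integrableOn⟩
    have hempty : (⋂ i : ℝ, Iio (-i)) = (∅ : Set ℝ) := by
      ext x
      simp only [mem_iInter, mem_Iio, mem_empty_iff_false, iff_false, not_forall, not_lt]
      exact ⟨-x, by linarith⟩
    rw [hempty] at h
    simp only [Measure.restrict_empty, integral_zero_measure] at h
    have h2 : Filter.Tendsto (fun i : ℝ => -i) atBot atTop := tendsto_neg_atBot_atTop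
    have h3 := h.comp h2
    exact h3.congr (fun x => by simp [Function.comp]; rfl)
  -- limits of D
  have hD_top : Filter.Tendsto (Dfun μ α₀) atTop (nhds ε) := by
    have h := (hF_top.const_mul (α₀ / (2 * μ))).const_sub 1
    rw [hcI] at h
    exact h
  have hD_bot : Filter.Tendsto (Dfun μ α₀) atBot (nhds 1) := by
    have h := (hF_bot.const_mul (α₀ / (2 * μ))).const_sub 1
    simp at h; exact h
  -- the antiderivative
  set φ : ℝ → ℝ := fun ξ => -(2 * μ) * Real.log (Dfun μ α₀ ξ) with hφ_def
  have hφ_deriv : ∀ ξ, HasDerivAt φ (wfun μ α₀ ξ) ξ := by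
    intro ξ
    have h1 : HasDerivAt (fun ξ => Real.log (Dfun μ α₀ ξ))
        (-(α₀ / (2 * μ) * g ξ) / Dfun μ α₀ ξ) ξ := (hD_deriv ξ).log (hD_ne ξ)
    have h2 := h1.const_mul (-(2 * μ))
    have hnum : -(2 * μ) * -(α₀ / (2 * μ) * g ξ) = α₀ * g ξ := by
      field_simp
    have heq : wfun μ α₀ ξ = -(2 * μ) * (-(α₀ / (2 * μ) * g ξ) / Dfun μ α₀ ξ) := by
      rw [hw_eq, ← hnum, mul_div_assoc]
    rw [heq]
    exact h2
  have hφ_top : Filter.Tendsto φ atTop (nhds (-(2 * μ) * Real.log ε)) := by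
    exact (((Real.continuousAt_log hε_pos.ne').tendsto).comp hD_top).const_mul _
  have hφ_bot : Filter.Tendsto φ atBot (nhds 0) := by
    have h := (((Real.continuousAt_log one_ne_zero).tendsto).comp hD_bot).const_mul (-(2 * μ))
    simpa only [Function.comp, Real.log_one, mul_zero] using h
  have hint : (∫ ξ : ℝ, wfun μ α₀ ξ) = -(2 * μ) * Real.log ε - 0 :=
    integral_of_hasDerivAt_of_tendsto hφ_deriv hw_int hφ_bot hφ_top
  have hmain : (∫ ξ : ℝ, wfun μ α₀ ξ) = -2 * μ * Real.log (1 - α₀ * s) := by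
    rw [hint, hε_def]; ring
  refine ⟨hw_int, hmain, ?_⟩
  intro M hM
  rw [hmain, hM]
  have h1 : 1 - Real.sqrt (μ / Real.pi) * (1 - Real.exp (-M / (2 * μ))) * s
      = Real.exp (-M / (2 * μ)) := by
    have : Real.sqrt (μ / Real.pi) * (1 - Real.exp (-M / (2 * μ))) * s
        = Real.sqrt (μ / Real.pi) * s * (1 - Real.exp (-M / (2 * μ))) := by ring
    rw [this, hss]; ring
  rw [h1, Real.log_exp]
  field_simp
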